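/- arXiv:1602.04208 — 4 statements merged into one kernel-verified Lean document; each statement's English description precedes it below -/
import Mathlib

section
/- Let H be a real inner product space, let z_1,...,z_i be vectors in H, let P_{i-1} be the orthogonal projection onto span{z_1,...,z_{i-1}} and P_i the orthogonal projection onto span{z_1,...,z_i}. For y ∈ H define residuals r_i = y - P_{i-1} y and r_{i+1} = y - P_i y, and set q_i := r_i - r_{i+1}. If z_i ∉ span{z_1,...,z_{i-1}} and z_i ≠ 0, then ‖q_i‖² ≥ ⟨z_i, r_i⟩² / ‖z_i‖². -/
open RealInnerProductSpace

/-- One-step residual decrease bound: with `p`, `p'` the orthogonal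
projections of `y` onto the spans of `z_1,…,z_{i-1}` resp. `z_1,…,z_i`, and
`q = r_i - r_{i+1}` the change of residual, if the new atom is not in the old span
(and nonzero) then `‖q‖² ≥ ⟪z_i, r_i⟫² / ‖z_i‖²`. -/
theorem stmt_2 {H : Type*} [NormedAddCommGroup H] [InnerProductSpace ℝ H]
    (n : ℕ) (z : Fin (n + 1) → H) (y p p' : H)
    (Vprev : Submodule ℝ H)
    (hVprev : Vprev = Submodule.span ℝ (Set.range fun j : Fin n => z j.castSucc))
    (Vfull : Submodule ℝ H)
    (hVfull : Vfull = Submodule.span ℝ (Set.range z))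
    (hp : p ∈ Vprev) (hporth : ∀ w ∈ Vprev, ⟪y - p, w⟫ = 0)
    (hp' : p' ∈ Vfull) (hp'orth : ∀ w ∈ Vfull, ⟪y - p', w⟫ = 0)
    (hznotin : z (Fin.last n) ∉ Vprev) (hz0 : z (Fin.last n) ≠ 0) :
    ⟪z (Fin.last n), y - p⟫ ^ 2 / ‖z (Fin.last n)‖ ^ 2 ≤ ‖(y - p) - (y - p')‖ ^ 2 := by
  set zl := z (Fin.last n)
  have hzf : zl ∈ Vfull := by
    rw [hVfull]; exact Submodule.subset_span ⟨Fin.last n, rfl⟩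
  have hq : (y - p) - (y - p') = p' - p := by abel
  have hkey : ⟪zl, y - p⟫ = ⟪zl, p' - p⟫ := by
    have h0 : ⟪y - p', zl⟫ = 0 := hp'orth zl hzf
    have : ⟪zl, y - p⟫ - ⟪zl, p' - p⟫ = ⟪zl, y - p'⟫ := by
      rw [← inner_sub_right]; congr 1; abel
    rw [real_inner_comm] at h0
    linarith [this, h0]
  rw [hq, hkey]
  have hcs := abs_real_inner_le_norm zl (p' - p)
  have hzn : ‖zl‖ ≠ 0 := norm_ne_zero_iff.mpr hz0
  have hz : (0:ℝ) < ‖zl‖ ^ 2 := by positivity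
  rw [div_le_iff₀ hz]
  calc ⟪zl, p' - p⟫ ^ 2 = |⟪zl, p' - p⟫| ^ 2 := (sq_abs _).symm
    _ ≤ (‖zl‖ * ‖p' - p‖) ^ 2 := by
        apply pow_le_pow_left₀ (abs_nonneg _) hcs
    _ = ‖p' - p‖ ^ 2 * ‖zl‖ ^ 2 := by ring
end

section
/- Let s_1,...,s_n be unit-norm vectors in a real inner product space with cumulative coherence μ(m-1) := max over index sets I of size m-1 and k ∉ I of Σ_{i∈I} |⟨s_k, s_i⟩|. If μ(m-1) < 1 for some m ≤ n, then for every index set J ⊆ [n] with |J| = m, the smallest eigenvalue of the Gram matrix G(J), defined by G(J)_{ij} = ⟨s_i, s_j⟩ for i,j ∈ J, satisfies λ_min(G(J)) ≥ 1 - μ(m-1). -/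
open RealInnerProductSpace

/-- If the cumulative coherence satisfies `μ(m-1) < 1`, then for any
index set `J` of size `m` the Gram matrix `G(J)` of the unit-norm atoms has all
eigenvalues at least `1 - μ(m-1)`. -/
theorem stmt_5 {E : Type*} [NormedAddCommGroup E] [InnerProductSpace ℝ E]
    (n m : ℕ) (hm1 : 1 ≤ m) (hm : m ≤ n)
    (s : Fin n → E) (hnorm : ∀ i, ‖s i‖ = 1)
    (μ : ℝ)
    (hμ : ∀ (I : Finset (Fin n)) (k : Fin n), I.card = m - 1 → k ∉ I →
      ∑ i ∈ I, |⟪s k, s i⟫| ≤ μ)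
    (hμlt : μ < 1)
    (J : Finset (Fin n)) (hJ : J.card = m)
    (G : Matrix J J ℝ) (hGdef : ∀ i j : J, G i j = ⟪s i, s j⟫)
    (hG : G.IsHermitian) :
    ∀ i : J, 1 - μ ≤ hG.eigenvalues i := by
  intro i
  set lam := hG.eigenvalues i with hlam
  have heig : Module.End.HasEigenvalue (Matrix.toLin' G) lam := by
    have hv := hG.mulVec_eigenvectorBasis i
    refine Module.End.hasEigenvalue_of_hasEigenvector
      (x := fun j => hG.eigenvectorBasis i j) ⟨?_, ?_⟩
    · rw [Module.End.mem_eigenspace_iff]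
      ext j
      simpa [Matrix.toLin'_apply] using congrFun hv j
    · intro h
      have h2 := (hG.eigenvectorBasis).orthonormal.1 i
      have h3 : hG.eigenvectorBasis i = 0 := by
        ext j; exact congrFun h j
      rw [h3] at h2
      simp at h2
  obtain ⟨k, hk⟩ := eigenvalue_mem_ball heig
  rw [Metric.mem_closedBall, Real.dist_eq] at hk
  have hdiag : G k k = 1 := by
    rw [hGdef, real_inner_self_eq_norm_sq, hnorm]; norm_num
  have hrow : ∑ j ∈ Finset.univ.erase k, ‖G k j‖ ≤ μ := by
    have hcard : (J.erase (k : Fin n)).card = m - 1 := by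
      rw [Finset.card_erase_of_mem k.2, hJ]
    have hne : (k : Fin n) ∉ J.erase (k : Fin n) := Finset.notMem_erase _ _
    have hfull : ∑ j : J, ‖G k j‖ = ∑ x ∈ J, |⟪ s (k : Fin n), s x⟫| := by
      rw [← Finset.sum_attach J (fun x => |⟪ s (k : Fin n), s x⟫|)]
      refine Finset.sum_congr rfl fun j _ => ?_
      rw [hGdef, Real.norm_eq_abs]
    have hsum : ∑ j ∈ Finset.univ.erase k, ‖G k j‖
        = ∑ x ∈ J.erase (k : Fin n), |⟪ s (k : Fin n), s x⟫| := by
      have hself : |⟪ s (k : Fin n), s (k : Fin n)⟫| = (1:ℝ) := by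
        rw [real_inner_self_eq_norm_sq, hnorm]; norm_num
      rw [Finset.sum_erase_eq_sub (Finset.mem_univ k),
        Finset.sum_erase_eq_sub k.2, hfull, hdiag, hself, norm_one]
    rw [hsum]
    exact hμ _ _ hcard hne
  have : 1 - lam ≤ μ := by
    calc 1 - lam = -(lam - G k k) := by rw [hdiag]; ring
    _ ≤ |lam - G k k| := neg_le_abs _
    _ ≤ _ := hk
    _ ≤ μ := hrow
  linarith
end

section
/- Let S be a finite symmetric dictionary of unit-norm atoms in a real Hilbert space H with |S| = n, and suppose y ∈ lin(S) can be written using m ≤ n atoms where μ(m-1) < 1. Then the residuals of orthogonal matching pursuit satisfy ‖r_{i+1}‖² ≤ (1 - (1 - μ(m-1))/m) · ‖r_i‖² for all iterations 1 ≤ i ≤ m. -/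
open RealInnerProductSpace

/-- Coherence-based linear convergence of OMP when `y ∈ lin(S)` is
supported on `m ≤ n` atoms and `μ(m-1) < 1`: each residual of orthogonal matching
pursuit (whose selected atoms stay in the support) contracts as
`‖r_{i+1}‖² ≤ (1 - (1 - μ(m-1))/m) ‖r_i‖²`. -/
theorem stmt_10 {H : Type*} [NormedAddCommGroup H] [InnerProductSpace ℝ H] [CompleteSpace H]
    (n m : ℕ) (hm1 : 1 ≤ m) (hm : m ≤ n)
    (s : Fin n → H) (hnorm : ∀ i, ‖s i‖ = 1)
    (hsym : ∀ i, ∃ j, s j = -s i)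
    (μ : ℝ)
    (hμ : ∀ (I : Finset (Fin n)) (k : Fin n), I.card = m - 1 → k ∉ I →
      ∑ i ∈ I, |⟪s k, s i⟫| ≤ μ)
    (hμlt : μ < 1)
    (y : H) (T : Finset (Fin n)) (hT : T.card = m)
    (hyT : y ∈ Submodule.span ℝ (s '' ↑T))
    (prev : Finset (Fin n)) (hprevT : prev ⊆ T)
    (xi : H) (hxi : xi ∈ Submodule.span ℝ (s '' ↑prev))
    (hxiorth : ∀ w ∈ Submodule.span ℝ (s '' ↑prev), ⟪y - xi, w⟫ = 0)
    (k : Fin n) (hmax : ∀ j, |⟪s j, y - xi⟫| ≤ |⟪s k, y - xi⟫|)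
    (xi' : H) (hxi' : xi' ∈ Submodule.span ℝ (insert (s k) (s '' ↑prev)))
    (hxi'orth : ∀ w ∈ Submodule.span ℝ (insert (s k) (s '' ↑prev)), ⟪y - xi', w⟫ = 0) :
    ‖y - xi'‖ ^ 2 ≤ (1 - (1 - μ) / (m : ℝ)) * ‖y - xi‖ ^ 2 := by
  set t : ℝ := ⟪s k, y - xi⟫ with ht
  -- Step A : ‖y - xi'‖^2 ≤ ‖y - xi‖^2 - t^2
  have hskV : s k ∈ Submodule.span ℝ (insert (s k) (s '' ↑prev)) :=
    Submodule.subset_span (Set.mem_insert _ _)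
  have hxiV : xi ∈ Submodule.span ℝ (insert (s k) (s '' ↑prev)) :=
    Submodule.span_mono (Set.subset_insert _ _) hxi
  have hvV : xi + t • s k ∈ Submodule.span ℝ (insert (s k) (s '' ↑prev)) :=
    Submodule.add_mem _ hxiV (Submodule.smul_mem _ _ hskV)
  have horth : ⟪y - xi', xi' - (xi + t • s k)⟫ = 0 :=
    hxi'orth _ (Submodule.sub_mem _ hxi' hvV)
  have hdecomp : y - (xi + t • s k) = (y - xi') + (xi' - (xi + t • s k)) := by abel
  have h1 : ‖y - (xi + t • s k)‖ ^ 2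
      = ‖y - xi'‖ ^ 2 + ‖xi' - (xi + t • s k)‖ ^ 2 := by
    rw [hdecomp, norm_add_sq_real, horth]; ring
  have h2 : ‖y - (xi + t • s k)‖ ^ 2 = ‖y - xi‖ ^ 2 - t ^ 2 := by
    have hd2 : y - (xi + t • s k) = (y - xi) - t • s k := by abel
    rw [hd2, norm_sub_sq_real, real_inner_smul_right, norm_smul, ← real_inner_comm, ← ht]
    simp [hnorm k, mul_pow, sq_abs]
    ring
  have hA : ‖y - xi'‖ ^ 2 ≤ ‖y - xi‖ ^ 2 - t ^ 2 := by
    nlinarith [sq_nonneg ‖xi' - (xi + t • s k)‖]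
  -- Step B : coefficients
  have hrT : y - xi ∈ Submodule.span ℝ (s '' ↑T) :=
    Submodule.sub_mem _ hyT (Submodule.span_mono (Set.image_mono hprevT) hxi)
  obtain ⟨l, hls, hlr⟩ := (Finsupp.mem_span_image_iff_linearCombination ℝ).1 hrT
  have hr : ∑ i ∈ T, l i • s i = y - xi := by
    rw [Finsupp.linearCombination_apply, Finsupp.sum] at hlr
    rw [← hlr]
    exact (Finset.sum_subset (Finsupp.mem_supported ℝ l |>.1 hls) (by
      intro i _ hi; simp [Finsupp.notMem_support_iff.1 hi])).symm
  set N2 : ℝ := ‖y - xi‖ ^ 2 with hN2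
  set A : ℝ := ∑ i ∈ T, |l i| with hAdef
  set Q : ℝ := ∑ i ∈ T, (l i) ^ 2 with hQdef
  have hQ0 : 0 ≤ Q := Finset.sum_nonneg fun i _ => sq_nonneg _
  have hA0 : 0 ≤ A := Finset.sum_nonneg fun i _ => abs_nonneg _
  -- (1) N2 ≤ A * |t|
  have hinner : N2 = ∑ i ∈ T, l i * ⟪s i, y - xi⟫ := by
    rw [hN2, ← real_inner_self_eq_norm_sq]
    conv_lhs => rw [← hr, sum_inner]
    refine Finset.sum_congr rfl fun i _ => ?_
    rw [real_inner_smul_left, hr]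
  have hN2AM : N2 ≤ A * |t| := by
    rw [hinner, hAdef, Finset.sum_mul]
    refine Finset.sum_le_sum fun i _ => ?_
    calc l i * ⟪s i, y - xi⟫ ≤ |l i * ⟪s i, y - xi⟫| := le_abs_self _
      _ = |l i| * |⟪s i, y - xi⟫| := abs_mul _ _
      _ ≤ |l i| * |t| := mul_le_mul_of_nonneg_left (hmax i) (abs_nonneg _)
  -- (2) (1-μ) * Q ≤ N2
  have herase : ∀ i ∈ T, ∑ j ∈ T.erase i, |⟪s i, s j⟫| ≤ μ := fun i hi =>
    hμ (T.erase i) i (by rw [Finset.card_erase_of_mem hi, hT]) (Finset.notMem_erase i T)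
  have hgram : N2 = ∑ i ∈ T, ∑ j ∈ T, l i * l j * ⟪s i, s j⟫ := by
    rw [hN2, ← real_inner_self_eq_norm_sq]
    conv_lhs => rw [← hr, sum_inner]
    refine Finset.sum_congr rfl fun i _ => ?_
    rw [inner_sum]
    refine Finset.sum_congr rfl fun j _ => ?_
    rw [real_inner_smul_left, real_inner_smul_right]; ring
  have hsplit : N2 = Q + ∑ i ∈ T, ∑ j ∈ T.erase i, l i * l j * ⟪s i, s j⟫ := by
    rw [hgram, hQdef, ← Finset.sum_add_distrib]
    refine Finset.sum_congr rfl fun i hi => ?_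
    rw [← Finset.add_sum_erase _ _ hi, real_inner_self_eq_norm_sq, hnorm i]
    ring
  have hswap : ∑ i ∈ T, ∑ j ∈ T.erase i, (l j) ^ 2 * |⟪s i, s j⟫|
      = ∑ i ∈ T, ∑ j ∈ T.erase i, (l i) ^ 2 * |⟪s i, s j⟫| := by
    rw [Finset.sum_comm' (s' := fun j => T.erase j) (t' := T) (fun i j => by
        simp only [Finset.mem_erase]
        exact ⟨fun ⟨h1, h2, h3⟩ => ⟨⟨Ne.symm h2, h1⟩, h3⟩,
          fun ⟨⟨h2, h1⟩, h3⟩ => ⟨h1, Ne.symm h2, h3⟩⟩)]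
    refine Finset.sum_congr rfl fun j _ => Finset.sum_congr rfl fun i _ => ?_
    rw [real_inner_comm]
  have hcross : ∑ i ∈ T, ∑ j ∈ T.erase i, |l i * l j * ⟪s i, s j⟫| ≤ μ * Q := by
    have step1 : ∑ i ∈ T, ∑ j ∈ T.erase i, |l i * l j * ⟪s i, s j⟫|
        ≤ ∑ i ∈ T, ∑ j ∈ T.erase i,
          (((l i) ^ 2 * |⟪s i, s j⟫|) + ((l j) ^ 2 * |⟪s i, s j⟫|)) / 2 := by
      refine Finset.sum_le_sum fun i _ => Finset.sum_le_sum fun j _ => ?_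
      rw [abs_mul, abs_mul]
      nlinarith [sq_nonneg (|l i| - |l j|), abs_nonneg (⟪s i, s j⟫ : ℝ),
        sq_abs (l i), sq_abs (l j), mul_nonneg (abs_nonneg (l i)) (abs_nonneg (l j))]
    have step2 : ∑ i ∈ T, ∑ j ∈ T.erase i,
          (((l i) ^ 2 * |⟪s i, s j⟫|) + ((l j) ^ 2 * |⟪s i, s j⟫|)) / 2
        = ∑ i ∈ T, ∑ j ∈ T.erase i, (l i) ^ 2 * |⟪s i, s j⟫| := by
      calc ∑ i ∈ T, ∑ j ∈ T.erase i,
            (((l i) ^ 2 * |⟪s i, s j⟫|) + ((l j) ^ 2 * |⟪s i, s j⟫|)) / 2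
          = (∑ i ∈ T, ∑ j ∈ T.erase i,
            (((l i) ^ 2 * |⟪s i, s j⟫|) + ((l j) ^ 2 * |⟪s i, s j⟫|))) / 2 := by
            simp_rw [← Finset.sum_div]
        _ = ((∑ i ∈ T, ∑ j ∈ T.erase i, (l i) ^ 2 * |⟪s i, s j⟫|)
            + ∑ i ∈ T, ∑ j ∈ T.erase i, (l j) ^ 2 * |⟪s i, s j⟫|) / 2 := by
            simp_rw [Finset.sum_add_distrib]
        _ = ∑ i ∈ T, ∑ j ∈ T.erase i, (l i) ^ 2 * |⟪s i, s j⟫| := by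
            rw [hswap]; ring
    have step3 : ∑ i ∈ T, ∑ j ∈ T.erase i, (l i) ^ 2 * |⟪s i, s j⟫| ≤ μ * Q := by
      rw [hQdef, Finset.mul_sum]
      refine Finset.sum_le_sum fun i hi => ?_
      rw [← Finset.mul_sum]
      calc (l i) ^ 2 * ∑ j ∈ T.erase i, |⟪s i, s j⟫|
          ≤ (l i) ^ 2 * μ := mul_le_mul_of_nonneg_left (herase i hi) (sq_nonneg _)
        _ = μ * (l i) ^ 2 := by ring
    linarith
  have key2 : (1 - μ) * Q ≤ N2 := by
    have habs : |∑ i ∈ T, ∑ j ∈ T.erase i, l i * l j * ⟪s i, s j⟫|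
        ≤ ∑ i ∈ T, ∑ j ∈ T.erase i, |l i * l j * ⟪s i, s j⟫| := by
      calc |∑ i ∈ T, ∑ j ∈ T.erase i, l i * l j * ⟪s i, s j⟫|
          ≤ ∑ i ∈ T, |∑ j ∈ T.erase i, l i * l j * ⟪s i, s j⟫| := Finset.abs_sum_le_sum_abs _ _
        _ ≤ ∑ i ∈ T, ∑ j ∈ T.erase i, |l i * l j * ⟪s i, s j⟫| :=
          Finset.sum_le_sum fun i _ => Finset.abs_sum_le_sum_abs _ _
    have h5 := (abs_le.1 (habs.trans hcross)).1
    linarith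
  -- (3) A^2 ≤ m * Q
  have hAQ : A ^ 2 ≤ (m : ℝ) * Q := by
    have h6 := sq_sum_le_card_mul_sum_sq (s := T) (f := fun i => |l i|)
    simpa [hT, sq_abs, hAdef, hQdef] using h6
  -- combine
  have hmpos : (0 : ℝ) < m := by exact_mod_cast hm1
  have hN20 : 0 ≤ N2 := sq_nonneg _
  have hstep : (1 - μ) * N2 ≤ (m : ℝ) * t ^ 2 := by
    have h4 : N2 * N2 ≤ ((m : ℝ) * Q) * t ^ 2 := by
      calc N2 * N2 ≤ (A * |t|) * (A * |t|) :=
            mul_le_mul hN2AM hN2AM hN20 (mul_nonneg hA0 (abs_nonneg _))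
        _ = A ^ 2 * |t| ^ 2 := by ring
        _ ≤ ((m : ℝ) * Q) * t ^ 2 := by
            rw [sq_abs]
            exact mul_le_mul_of_nonneg_right hAQ (sq_nonneg _)
    rcases eq_or_lt_of_le hN20 with hz | hz
    · rw [← hz]
      have : (0:ℝ) ≤ (m : ℝ) * t ^ 2 := mul_nonneg hmpos.le (sq_nonneg t)
      linarith
    · have h1μ : (0:ℝ) ≤ 1 - μ := by linarith
      have e1 : (1 - μ) * (N2 * N2) ≤ (1 - μ) * (((m : ℝ) * Q) * t ^ 2) :=
        mul_le_mul_of_nonneg_left h4 h1μ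
      have e2 : (1 - μ) * (((m : ℝ) * Q) * t ^ 2) = ((m : ℝ) * t ^ 2) * ((1 - μ) * Q) := by
        ring
      have e3 : ((m : ℝ) * t ^ 2) * ((1 - μ) * Q) ≤ ((m : ℝ) * t ^ 2) * N2 :=
        mul_le_mul_of_nonneg_left key2 (mul_nonneg hmpos.le (sq_nonneg t))
      have e4 : ((1 - μ) * N2) * N2 ≤ ((m : ℝ) * t ^ 2) * N2 := by
        calc ((1 - μ) * N2) * N2 = (1 - μ) * (N2 * N2) := by ring
          _ ≤ ((m : ℝ) * t ^ 2) * N2 := by linarith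
      exact le_of_mul_le_mul_right e4 hz
  have hfin : (1 - μ) / (m : ℝ) * N2 ≤ t ^ 2 := by
    rw [div_mul_eq_mul_div, div_le_iff₀ hmpos]
    linarith
  have hrw : (1 - (1 - μ) / (m : ℝ)) * N2 = N2 - (1 - μ) / (m : ℝ) * N2 := by ring
  linarith
end

section
/- Let H be a real Hilbert space, S ⊂ H a set of atoms all of norm c > 0, and y ∈ H with best-approximation residual r⋆ from lin(S). Suppose at each iteration i the selected atom z̃_i satisfies the approximation guarantee ⟨z̃_i, r_i⟩ ≥ δ_i ⟨z_i, r_i⟩ for some δ_i ∈ (0,1], where z_i = argmax_{z∈S} ⟨z, r_i⟩, and weights are fully re-optimized (residual = y minus orthogonal projection onto span of selected atoms). Then ‖r_{i+1} - r⋆‖² ≤ (1 - δ_i² ⟨z_i, r_i - r⋆⟩² / (‖z_i‖² ‖r_i - r⋆‖²)) · ‖r_i - r⋆‖². -/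
open RealInnerProductSpace

/-- Linear convergence of generalized pursuit with an inexact LMO:
if the selected atom `zt` satisfies `⟪zt, r_i⟫ ≥ δ_i ⟪z_i, r_i⟫` where `z_i` is the
exact maximizer, all atoms having norm `c > 0`, then
`‖r_{i+1} - r⋆‖² ≤ (1 - δ_i² ⟪z_i, r_i - r⋆⟫²/(‖z_i‖² ‖r_i - r⋆‖²)) ‖r_i - r⋆‖²`. -/
theorem stmt_11 {H : Type*} [NormedAddCommGroup H] [InnerProductSpace ℝ H] [CompleteSpace H]
    (S : Set H) (c : ℝ) (hc : 0 < c) (hSnorm : ∀ s ∈ S, ‖s‖ = c)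
    (y xstar : H)
    (hxstar : xstar ∈ closure ((Submodule.span ℝ S : Submodule ℝ H) : Set H))
    (hmin : ∀ x ∈ closure ((Submodule.span ℝ S : Submodule ℝ H) : Set H),
      ‖y - xstar‖ ≤ ‖y - x‖)
    (horth : ∀ s ∈ S, ⟪y - xstar, s⟫ = 0)
    (prev : Finset H) (hprev : ↑prev ⊆ S)
    (xi : H) (hxi : xi ∈ Submodule.span ℝ (prev : Set H))
    (hxiorth : ∀ w ∈ Submodule.span ℝ (prev : Set H), ⟪y - xi, w⟫ = 0)
    (zi : H) (hzi : zi ∈ S)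
    (hmax : ∀ z ∈ S, ⟪z, y - xi⟫ ≤ ⟪zi, y - xi⟫)
    (δ : ℝ) (hδ0 : 0 < δ) (hδ1 : δ ≤ 1)
    (zt : H) (hzt : zt ∈ S)
    (happrox : δ * ⟪zi, y - xi⟫ ≤ ⟪zt, y - xi⟫)
    (xi' : H) (hxi' : xi' ∈ Submodule.span ℝ (insert zt (prev : Set H)))
    (hxi'orth : ∀ w ∈ Submodule.span ℝ (insert zt (prev : Set H)), ⟪y - xi', w⟫ = 0) :
    ‖(y - xi') - (y - xstar)‖ ^ 2 ≤
      (1 - δ ^ 2 * ⟪zi, (y - xi) - (y - xstar)⟫ ^ 2 /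
          (‖zi‖ ^ 2 * ‖(y - xi) - (y - xstar)‖ ^ 2)) * ‖(y - xi) - (y - xstar)‖ ^ 2 := by
  have hK : Submodule.span ℝ (insert zt (prev : Set H)) ≤ Submodule.span ℝ S :=
    Submodule.span_mono (by
      intro a ha
      rcases ha with rfl | ha
      · exact hzt
      · exact hprev ha)
  -- rstar orthogonal to span S
  have hspan_orth : ∀ w ∈ Submodule.span ℝ S, ⟪y - xstar, w⟫ = 0 := by
    intro w hw
    induction hw using Submodule.span_induction with
    | mem z hz => exact horth z hz
    | zero => simp
    | add a b _ _ ha hb => rw [inner_add_right, ha, hb]; ring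
    | smul t a _ ha => rw [inner_smul_right, ha]; ring
  have hclos_orth : ∀ w ∈ closure ((Submodule.span ℝ S : Submodule ℝ H) : Set H),
      ⟪y - xstar, w⟫ = 0 := fun w hw =>
    closure_minimal (fun u hu => hspan_orth u hu)
      (isClosed_eq (Continuous.inner continuous_const continuous_id) continuous_const) hw
  -- memberships in topological closure
  set T := (Submodule.span ℝ S).topologicalClosure with hT
  have hTcoe : (T : Set H) = closure ((Submodule.span ℝ S : Submodule ℝ H) : Set H) := rfl
  have hxstarT : xstar ∈ T := hxstar
  have hxiT : xi ∈ T :=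
    (Submodule.span ℝ S).le_topologicalClosure (Submodule.span_mono hprev hxi)
  have hxi'T : xi' ∈ T := (Submodule.span ℝ S).le_topologicalClosure (hK hxi')
  have hd1 : (y - xi) - (y - xstar) = xstar - xi := by abel
  have hd2 : (y - xi') - (y - xstar) = xstar - xi' := by abel
  -- Pythagoras for ri'
  have pyth : ∀ x : H, x ∈ T →
      ‖y - x‖ ^ 2 = ‖y - xstar‖ ^ 2 + ‖(y - x) - (y - xstar)‖ ^ 2 := by
    intro x hx
    set v := (y - x) - (y - xstar) with hv
    have horx : ⟪y - xstar, v⟫ = 0 := by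
      have hv2 : v = xstar - x := by rw [hv]; abel
      rw [hv2]
      exact hclos_orth _ (T.sub_mem hxstarT hx)
    have hsum : y - x = (y - xstar) + v := by rw [hv]; abel
    calc ‖y - x‖ ^ 2 = ‖(y - xstar) + v‖ ^ 2 := by rw [← hsum]
      _ = ‖y - xstar‖ ^ 2 + ‖v‖ ^ 2 := by rw [norm_add_sq_real, horx]; ring
  have hpy' := pyth xi' hxi'T
  have hpy := pyth xi hxiT
  -- decrease bound
  have hztnorm : ‖zt‖ = c := hSnorm zt hzt
  have hznorm : ‖zi‖ = c := hSnorm zi hzi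
  have hdec : ‖y - xi'‖ ^ 2 ≤ ‖y - xi‖ ^ 2 - ⟪zt, y - xi⟫ ^ 2 / c ^ 2 := by
    set t : ℝ := ⟪zt, y - xi⟫ / c ^ 2 with ht
    set x : H := xi + t • zt with hx
    have hxmem : x ∈ Submodule.span ℝ (insert zt (prev : Set H)) := by
      apply Submodule.add_mem
      · exact Submodule.span_mono (Set.subset_insert _ _) hxi
      · exact Submodule.smul_mem _ _ (Submodule.subset_span (Set.mem_insert _ _))
    -- ‖y - xi'‖² ≤ ‖y - x‖²
    have h1 : ‖y - xi'‖ ^ 2 ≤ ‖y - x‖ ^ 2 := by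
      have horx : ⟪y - xi', x - xi'⟫ = 0 :=
        hxi'orth _ (Submodule.sub_mem _ hxmem hxi')
      have hsplit : y - x = (y - xi') + -(x - xi') := by abel
      rw [hsplit, norm_add_sq_real, inner_neg_right, horx]
      have := sq_nonneg ‖x - xi'‖
      rw [norm_neg]
      nlinarith
    have h2 : ‖y - x‖ ^ 2 = ‖y - xi‖ ^ 2 - ⟪zt, y - xi⟫ ^ 2 / c ^ 2 := by
      have hsplit : y - x = (y - xi) - t • zt := by rw [hx]; abel
      rw [hsplit, norm_sub_sq_real, inner_smul_right, norm_smul, real_inner_comm]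
      rw [mul_pow, hztnorm]
      field_simp [ht]
      rw [Real.norm_eq_abs, sq_abs]
      have e : c ^ 2 * t = ⟪zt, y - xi⟫ := by rw [ht]; field_simp [hc.ne']
      linear_combination (c ^ 2 * t - ⟪zt, y - xi⟫) * e
    linarith
  -- inner product comparison
  have hzio : ⟪zi, y - xstar⟫ = 0 := by
    rw [real_inner_comm]; exact horth zi hzi
  have hzto : ⟪zt, y - xstar⟫ = 0 := by
    rw [real_inner_comm]; exact horth zt hzt
  have hsq : δ ^ 2 * ⟪zi, y - xi⟫ ^ 2 ≤ ⟪zt, y - xi⟫ ^ 2 := by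
    rcases le_or_gt 0 ⟪zi, y - xi⟫ with hpos | hneg
    · have h0 : 0 ≤ δ * ⟪zi, y - xi⟫ := mul_nonneg hδ0.le hpos
      nlinarith
    · have hle : ⟪zt, y - xi⟫ ≤ ⟪zi, y - xi⟫ := hmax zt hzt
      have hab : 0 ≤ (⟪zi, y - xi⟫ - ⟪zt, y - xi⟫) * (-(⟪zi, y - xi⟫ + ⟪zt, y - xi⟫)) :=
        mul_nonneg (by linarith) (by linarith)
      have hδ2 : δ ^ 2 ≤ 1 := by nlinarith
      nlinarith [sq_nonneg (⟪zi, y - xi⟫ : ℝ), hab]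
  have hziv : ⟪zi, (y - xi) - (y - xstar)⟫ = ⟪zi, y - xi⟫ := by
    rw [inner_sub_right, hzio]; ring
  have hztv : ⟪zt, (y - xi) - (y - xstar)⟫ = ⟪zt, y - xi⟫ := by
    rw [inner_sub_right, hzto]; ring
  -- combine
  have key : ‖(y - xi') - (y - xstar)‖ ^ 2 ≤
      ‖(y - xi) - (y - xstar)‖ ^ 2 - δ ^ 2 * ⟪zi, (y - xi) - (y - xstar)⟫ ^ 2 / c ^ 2 := by
    rw [hziv]
    have hc2 : (0:ℝ) < c ^ 2 := by positivity
    have hdiv : δ ^ 2 * ⟪zi, y - xi⟫ ^ 2 / c ^ 2 ≤ ⟪zt, y - xi⟫ ^ 2 / c ^ 2 := by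
      gcongr
    linarith [hpy, hpy', hdec]
  rcases eq_or_ne ‖(y - xi) - (y - xstar)‖ 0 with hv0 | hv0
  · have hveq : (y - xi) - (y - xstar) = 0 := norm_eq_zero.mp hv0
    have hz0 : ⟪zi, y - xi⟫ = 0 := by rw [← hziv, hveq, inner_zero_right]
    have hz0' : ⟪zi, (y - xi) - (y - xstar)⟫ = 0 := by
      rw [hveq, inner_zero_right]
    rw [hv0, hz0'] at key ⊢
    have heq : ((1:ℝ) - δ ^ 2 * (0:ℝ) ^ 2 / (‖zi‖ ^ 2 * (0:ℝ) ^ 2)) * (0:ℝ) ^ 2 = 0 := by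
      ring
    rw [heq]
    simpa using key
  · have hv2 : (0:ℝ) < ‖(y - xi) - (y - xstar)‖ ^ 2 := by positivity
    have haux : ∀ A V : ℝ, V ≠ 0 → (1 - A / (c ^ 2 * V)) * V = V - A / c ^ 2 := by
      intro A V hV
      field_simp
    have : (1 - δ ^ 2 * ⟪zi, (y - xi) - (y - xstar)⟫ ^ 2 /
          (‖zi‖ ^ 2 * ‖(y - xi) - (y - xstar)‖ ^ 2)) * ‖(y - xi) - (y - xstar)‖ ^ 2
        = ‖(y - xi) - (y - xstar)‖ ^ 2 -
          δ ^ 2 * ⟪zi, (y - xi) - (y - xstar)⟫ ^ 2 / c ^ 2 := by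
      rw [hznorm]
      exact haux _ _ hv2.ne'
    rw [this]
    exact key
end
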